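/- Let K be a compact metric space, ν a Borel probability measure on K, and c : K → ℝ a bounded measurable function. Then the probability measure μ* defined by μ*(B) := ( ∫_B 2^{c(x)} ν(dx) ) / ( ∫_K 2^{c(x)} ν(dx) ) for Borel sets B ⊆ K is the unique minimizer of μ ↦ KL(μ‖ν) − ∫_K c dμ over all Borel probability measures μ on K, and the optimal value equals −log ∫_K 2^{c(x)} ν(dx). -/

import Mathlib

open MeasureTheory

lemma gibbs_integrable_of_bdd {α : Type*} [MeasurableSpace α] {m : Measure α}
    [IsFiniteMeasure m] {g : α → ℝ} {B : ℝ} (hg : Measurable g) (hB : ∀ x, |g x| ≤ B) :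
    Integrable g m :=
  ⟨hg.aestronglyMeasurable,
    HasFiniteIntegral.of_bounded (C := B) (Filter.Eventually.of_forall fun x => by
      simpa using hB x)⟩

lemma gibbs_aux {α : Type*} [MeasurableSpace α] {μ ν : Measure α}
    [IsProbabilityMeasure μ] [IsProbabilityMeasure ν]
    (hμν : μ ≪ ν) (hint : Integrable (llr μ ν) μ) :
    0 ≤ ∫ x, llr μ ν x ∂μ ∧ (∫ x, llr μ ν x ∂μ = 0 → μ = ν) := by
  have hg : (fun x => Real.exp (-(llr μ ν x))) =ᵐ[μ] fun x => (ν.rnDeriv μ x).toReal :=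
    exp_neg_llr hμν
  have hexp_int : Integrable (fun x => Real.exp (-(llr μ ν x))) μ :=
    (Measure.integrable_toReal_rnDeriv).congr hg.symm
  have hIeq : ∫ x, Real.exp (-(llr μ ν x)) ∂μ
      = 1 - ((ν.singularPart μ) Set.univ).toReal := by
    rw [integral_congr_ae hg, Measure.integral_toReal_rnDeriv']
    simp
    rfl
  have hIle : ∫ x, Real.exp (-(llr μ ν x)) ∂μ ≤ 1 := by
    rw [hIeq]; simp [ENNReal.toReal_nonneg]
  have hJ : Real.exp (∫ x, -(llr μ ν x) ∂μ) ≤ ∫ x, Real.exp (-(llr μ ν x)) ∂μ := by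
    have := convexOn_exp.map_integral_le (μ := μ) (f := fun x => -(llr μ ν x))
      Real.continuous_exp.continuousOn isClosed_univ
      (Filter.Eventually.of_forall fun x => Set.mem_univ _) hint.neg
      (by simpa [Function.comp_def] using hexp_int)
    simpa using this
  constructor
  · have h1 : Real.exp (∫ x, -(llr μ ν x) ∂μ) ≤ 1 := hJ.trans hIle
    rw [Real.exp_le_one_iff, integral_neg, neg_nonpos] at h1
    exact h1
  · intro h0
    have havg : ⨍ x, -(llr μ ν x) ∂μ = 0 := by
      rw [average_eq_integral, integral_neg, h0, neg_zero]
    have hstrict := strictConvexOn_exp.ae_eq_const_or_map_average_lt (μ := μ)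
      (f := fun x => -(llr μ ν x)) Real.continuous_exp.continuousOn isClosed_univ
      (Filter.Eventually.of_forall fun x => Set.mem_univ _) hint.neg
      (by simpa [Function.comp_def] using hexp_int)
    have hllr0 : llr μ ν =ᵐ[μ] 0 := by
      rcases hstrict with h | h
      · rw [havg] at h
        filter_upwards [h] with x hx
        have : -(llr μ ν x) = 0 := hx
        simpa [neg_eq_zero] using this
      · exfalso
        rw [havg, Real.exp_zero, average_eq_integral] at h
        exact absurd (h.trans_le hIle) (by norm_num)
    have hIexp1 : ∫ x, Real.exp (-(llr μ ν x)) ∂μ = 1 := by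
      have : ∫ x, Real.exp (-(llr μ ν x)) ∂μ = ∫ _x, (1 : ℝ) ∂μ := by
        refine integral_congr_ae ?_
        filter_upwards [hllr0] with x hx
        have : llr μ ν x = 0 := hx
        simp [this]
      simp [this]
    have hsing : (ν.singularPart μ) Set.univ = 0 := by
      rw [hIeq] at hIexp1
      have h2 : ((ν.singularPart μ) Set.univ).toReal = 0 := by linarith
      have h3 := measure_ne_top (ν.singularPart μ) Set.univ
      exact (ENNReal.toReal_eq_zero_iff _).mp h2 |>.resolve_right h3
    have hνμ : ν ≪ μ := (Measure.singularPart_eq_zero _ _).mp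
      (Measure.measure_univ_eq_zero.mp hsing)
    have hrn1 : μ.rnDeriv ν =ᵐ[μ] fun _ => 1 := by
      filter_upwards [hllr0, Measure.rnDeriv_pos hμν, hμν.ae_le (Measure.rnDeriv_lt_top μ ν)]
        with x h0x hpos hlt
      have hx : Real.log ((μ.rnDeriv ν x).toReal) = 0 := h0x
      have htpos : 0 < (μ.rnDeriv ν x).toReal := ENNReal.toReal_pos hpos.ne' hlt.ne
      have : (μ.rnDeriv ν x).toReal = 1 := by
        rcases Real.log_eq_zero.mp hx with h | h | h
        · linarith
        · exact h
        · linarith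
      rw [ENNReal.toReal_eq_one_iff] at this
      exact this
    have hrn1' : μ.rnDeriv ν =ᵐ[ν] fun _ => 1 := hνμ.ae_le hrn1
    calc μ = ν.withDensity (μ.rnDeriv ν) := (Measure.withDensity_rnDeriv_eq μ ν hμν).symm
      _ = ν.withDensity (fun _ => 1) := withDensity_congr_ae hrn1'
      _ = ν := by simp


open scoped Classical in
/-- Relative entropy (base-2 logarithm) of `μ` with respect to `ν`, valued in `EReal`:
`∫ log₂(dμ/dν) dμ` if `μ ≪ ν` and the integrand is `μ`-integrable, `+∞` otherwise. -/
noncomputable def KL2 {K : Type*} [MeasurableSpace K] (μ ν : Measure K) : EReal :=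
  if μ ≪ ν ∧ Integrable (fun x => Real.logb 2 ((μ.rnDeriv ν x).toReal)) μ then
    ((∫ x, Real.logb 2 ((μ.rnDeriv ν x).toReal) ∂μ : ℝ) : EReal)
  else ⊤

theorem stmt18 {K : Type*} [MetricSpace K] [CompactSpace K]
    [MeasurableSpace K] [BorelSpace K]
    (ν : Measure K) [IsProbabilityMeasure ν]
    (c : K → ℝ) (hcmeas : Measurable c) (hcbd : ∃ C, ∀ x, |c x| ≤ C)
    (μstar : Measure K)
    (hμstar : μstar =
      ν.withDensity fun x => ENNReal.ofReal ((2 : ℝ) ^ (c x) / ∫ y, (2 : ℝ) ^ (c y) ∂ν)) :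
    IsProbabilityMeasure μstar ∧
      (∀ μ : Measure K, IsProbabilityMeasure μ →
        KL2 μstar ν - ((∫ x, c x ∂μstar : ℝ) : EReal) ≤
          KL2 μ ν - ((∫ x, c x ∂μ : ℝ) : EReal)) ∧
      (∀ μ : Measure K, IsProbabilityMeasure μ →
        KL2 μ ν - ((∫ x, c x ∂μ : ℝ) : EReal) =
            KL2 μstar ν - ((∫ x, c x ∂μstar : ℝ) : EReal) →
          μ = μstar) ∧
      KL2 μstar ν - ((∫ x, c x ∂μstar : ℝ) : EReal) =
        ((-Real.logb 2 (∫ x, (2 : ℝ) ^ (c x) ∂ν) : ℝ) : EReal) := by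
  obtain ⟨C, hC⟩ := hcbd
  have hL : (0 : ℝ) < Real.log 2 := Real.log_pos one_lt_two
  set f : K → ℝ := fun x => Real.log 2 * c x with hf
  have hpow : ∀ x : K, (2 : ℝ) ^ (c x) = Real.exp (f x) := fun x =>
    Real.rpow_def_of_pos two_pos (c x)
  have hfm : Measurable f := hcmeas.const_mul _
  have hexpint : ∀ (m : Measure K) [IsFiniteMeasure m],
      Integrable (fun x => Real.exp (f x)) m := by
    intro m _
    refine gibbs_integrable_of_bdd (B := Real.exp (Real.log 2 * C)) hfm.exp fun x => ?_
    rw [abs_of_pos (Real.exp_pos _)]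
    refine Real.exp_le_exp.mpr ?_
    have := abs_le.mp (hC x)
    simp only [hf]
    nlinarith
  set Z := ∫ y, (2 : ℝ) ^ (c y) ∂ν with hZdef
  have hZeq : Z = ∫ y, Real.exp (f y) ∂ν := by
    rw [hZdef]
    exact integral_congr_ae (Filter.Eventually.of_forall fun y => hpow y)
  have hZpos : 0 < Z := hZeq ▸ integral_exp_pos (hexpint ν)
  have hμt : μstar = ν.tilted f := by
    rw [hμstar, Measure.tilted]
    congr 1
    funext x
    rw [hpow x, hZeq]
  haveI hPstar : IsProbabilityMeasure μstar := by
    rw [hμt]; exact isProbabilityMeasure_tilted (hexpint ν)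
  have hacstar : μstar ≪ ν := by
    rw [hμt]; exact tilted_absolutelyContinuous ν f
  have hmeasd : Measurable fun x => ENNReal.ofReal ((2 : ℝ) ^ (c x) / Z) := by
    simp only [hpow]
    exact (hfm.exp.div_const Z).ennreal_ofReal
  have hrn : μstar.rnDeriv ν =ᵐ[ν] fun x => ENNReal.ofReal ((2 : ℝ) ^ (c x) / Z) := by
    rw [hμstar]
    exact Measure.rnDeriv_withDensity ν hmeasd
  have hlogstar : (fun x => Real.logb 2 ((μstar.rnDeriv ν x).toReal))
      =ᵐ[μstar] fun x => c x - Real.logb 2 Z := by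
    filter_upwards [hacstar.ae_le hrn] with x hx
    have h2 : (0 : ℝ) < (2 : ℝ) ^ (c x) := Real.rpow_pos_of_pos two_pos _
    rw [hx, ENNReal.toReal_ofReal (by positivity),
      Real.logb_div h2.ne' hZpos.ne', Real.logb_rpow two_pos (by norm_num)]
  have hintstar : Integrable (fun x => Real.logb 2 ((μstar.rnDeriv ν x).toReal)) μstar := by
    refine Integrable.congr ?_ hlogstar.symm
    refine gibbs_integrable_of_bdd (B := C + |Real.logb 2 Z|)
      (hcmeas.sub_const _) fun x => ?_
    calc |c x - Real.logb 2 Z| ≤ |c x| + |Real.logb 2 Z| := abs_sub _ _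
      _ ≤ C + |Real.logb 2 Z| := by linarith [hC x]
  have hcintstar : Integrable c μstar := gibbs_integrable_of_bdd hcmeas hC
  have hKLstar : KL2 μstar ν = (((∫ x, c x ∂μstar) - Real.logb 2 Z : ℝ) : EReal) := by
    simp only [KL2]
    rw [if_pos ⟨hacstar, hintstar⟩]
    congr 1
    rw [integral_congr_ae hlogstar, integral_sub hcintstar (integrable_const _),
      integral_const]
    simp
  have hval : KL2 μstar ν - ((∫ x, c x ∂μstar : ℝ) : EReal)
      = ((-Real.logb 2 Z : ℝ) : EReal) := by
    rw [hKLstar, ← EReal.coe_sub]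
    norm_cast
    ring
  have key : ∀ μ : Measure K, IsProbabilityMeasure μ →
      (μ ≪ ν ∧ Integrable (fun x => Real.logb 2 ((μ.rnDeriv ν x).toReal)) μ) →
      (((-Real.logb 2 Z : ℝ) : EReal) ≤ KL2 μ ν - ((∫ x, c x ∂μ : ℝ) : EReal)) ∧
        (KL2 μ ν - ((∫ x, c x ∂μ : ℝ) : EReal) = ((-Real.logb 2 Z : ℝ) : EReal) →
          μ = μstar) := by
    rintro μ hPμ ⟨hac, hintlogb⟩
    have hillr : Integrable (llr μ ν) μ := by
      refine (hintlogb.mul_const (Real.log 2)).congr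
        (Filter.Eventually.of_forall fun x => ?_)
      simp [Real.logb, llr, div_mul_cancel₀ _ hL.ne']
    have hcintμ : Integrable c μ := gibbs_integrable_of_bdd hcmeas hC
    have hfintμ : Integrable f μ := hcintμ.const_mul _
    have hcomp := integral_llr_tilted_right hac hfintμ (hexpint ν) hillr
    have h_f : ∫ x, f x ∂μ = Real.log 2 * ∫ x, c x ∂μ := by
      simp only [hf]
      exact integral_const_mul _ _
    haveI : IsProbabilityMeasure (ν.tilted f) := isProbabilityMeasure_tilted (hexpint ν)
    have hactilt : μ ≪ ν.tilted f := hac.trans (absolutelyContinuous_tilted (hexpint ν))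
    have hilltilt : Integrable (llr μ (ν.tilted f)) μ :=
      integrable_llr_tilted_right hac hfintμ hillr (hexpint ν)
    obtain ⟨hge, heqc⟩ := gibbs_aux hactilt hilltilt
    have hKLμ : KL2 μ ν = (((∫ x, llr μ ν x ∂μ) / Real.log 2 : ℝ) : EReal) := by
      simp only [KL2]
      rw [if_pos ⟨hac, hintlogb⟩]
      congr 1
      rw [← integral_div]
      exact integral_congr_ae (Filter.Eventually.of_forall fun x => rfl)
    have hTeq : ∫ x, llr μ (ν.tilted f) x ∂μ
        = (∫ x, llr μ ν x ∂μ) - Real.log 2 * (∫ x, c x ∂μ) + Real.log Z := by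
      rw [hcomp, h_f, hZeq]
    rw [hTeq] at hge heqc
    have hlogbZ : Real.logb 2 Z = Real.log Z / Real.log 2 := rfl
    constructor
    · rw [hKLμ, ← EReal.coe_sub, EReal.coe_le_coe_iff, hlogbZ]
      rw [div_sub' hL.ne', ← neg_div, div_le_div_iff_of_pos_right hL]
      linarith
    · intro heq
      rw [hKLμ, ← EReal.coe_sub, EReal.coe_eq_coe_iff, hlogbZ] at heq
      have h0 : (∫ x, llr μ ν x ∂μ) - Real.log 2 * (∫ x, c x ∂μ) + Real.log Z = 0 := by
        field_simp at heq
        linarith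
      rw [hμt]
      exact heqc h0
  refine ⟨hPstar, ?_, ?_, hval⟩
  · intro μ hPμ
    by_cases hcond : μ ≪ ν ∧ Integrable (fun x => Real.logb 2 ((μ.rnDeriv ν x).toReal)) μ
    · rw [hval]
      exact (key μ hPμ hcond).1
    · have hKL : KL2 μ ν = ⊤ := by simp only [KL2]; rw [if_neg hcond]
      rw [hKL, EReal.top_sub_coe]
      exact le_top
  · intro μ hPμ heq
    by_cases hcond : μ ≪ ν ∧ Integrable (fun x => Real.logb 2 ((μ.rnDeriv ν x).toReal)) μ
    · exact (key μ hPμ hcond).2 (heq.trans hval)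
    · exfalso
      have hKL : KL2 μ ν = ⊤ := by simp only [KL2]; rw [if_neg hcond]
      rw [hKL, EReal.top_sub_coe, hval] at heq
      exact EReal.coe_ne_top _ heq.symm
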